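/- arXiv:2604.04065 — 3 statements merged into one kernel-verified Lean document; each statement's English description precedes it below -/
import Mathlib

section
/- Let P(X) = Σ_{j=0}^k A_j X^j be a polynomial over the permutations such that at least one non-constant coefficient A_j with j ≥ 1 contains the element 1 (a fixed point). Let X be a nonempty permutation with elements listed in nondecreasing order x_1 ≤ x_2 ≤ … ≤ x_m, and let 0 ≤ i < m. Then P(pref_i(X)) is a submultiset of P(X), and the minimum element of the multiset difference P(X) − P(pref_i(X)) equals x_{i+1}. -/
/-- Product of permutations (multisets of cycle lengths): each pair `(a, b)` contributes
`gcd(a, b)` copies of `lcm(a, b)`. -/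
def pmul (A B : Multiset ℕ) : Multiset ℕ :=
  A.bind fun a => B.bind fun b => Multiset.replicate (Nat.gcd a b) (Nat.lcm a b)

/-- Powers in the permutation semiring; `X^0` is the singleton `{1}`. -/
def ppow (A : Multiset ℕ) : ℕ → Multiset ℕ
  | 0 => {1}
  | n + 1 => pmul A (ppow A n)

/-- Evaluation of the polynomial `Σ_{i=0}^m A_i X^i` over the permutation semiring. -/
def peval (A : ℕ → Multiset ℕ) (m : ℕ) (X : Multiset ℕ) : Multiset ℕ :=
  (Finset.range (m + 1)).sum fun i => pmul (A i) (ppow X i)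

/-- A permutation is a multiset of positive natural numbers (cycle lengths). -/
def IsPerm (A : Multiset ℕ) : Prop := ∀ x ∈ A, 0 < x

lemma pmul_add_left (A B C : Multiset ℕ) : pmul (A + B) C = pmul A C + pmul B C :=
  Multiset.add_bind _ _ _

lemma pmul_add_right (A B C : Multiset ℕ) : pmul A (B + C) = pmul A B + pmul A C := by
  unfold pmul
  simp only [Multiset.add_bind, Multiset.bind_add]

lemma mem_pmul {y : ℕ} {A B : Multiset ℕ} :
    y ∈ pmul A B ↔ ∃ a ∈ A, ∃ b ∈ B, 0 < Nat.gcd a b ∧ y = Nat.lcm a b := by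
  unfold pmul
  simp only [Multiset.mem_bind, Multiset.mem_replicate]
  constructor
  · rintro ⟨a, ha, b, hb, h1, h2⟩; exact ⟨a, ha, b, hb, Nat.pos_of_ne_zero h1, h2⟩
  · rintro ⟨a, ha, b, hb, h1, h2⟩; exact ⟨a, ha, b, hb, h1.ne', h2⟩

lemma one_pmul (B : Multiset ℕ) : pmul {1} B = B := by
  unfold pmul
  rw [Multiset.singleton_bind]
  induction B using Multiset.induction with
  | empty => simp
  | cons a s ih => rw [Multiset.cons_bind, ih]; simp [Nat.lcm]

lemma pmul_le_left {A A' : Multiset ℕ} (C : Multiset ℕ) (h : A ≤ A') :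
    pmul A C ≤ pmul A' C := by
  obtain ⟨D, rfl⟩ := Multiset.le_iff_exists_add.mp h
  rw [pmul_add_left]
  exact Multiset.le_add_right _ _

lemma ppow_pos {X : Multiset ℕ} (hX : IsPerm X) (n : ℕ) : ∀ y ∈ ppow X n, 0 < y := by
  induction n with
  | zero => intro y hy; simp [ppow] at hy; omega
  | succ n ih =>
    intro y hy
    rw [ppow, mem_pmul] at hy
    obtain ⟨a, ha, b, hb, hg, rfl⟩ := hy
    exact Nat.pos_of_ne_zero (Nat.lcm_ne_zero (hX a ha).ne' (ih b hb).ne')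

lemma mem_ppow {x : ℕ} {X : Multiset ℕ} (hx : x ∈ X) (hpos : 0 < x) {n : ℕ} (hn : 1 ≤ n) :
    x ∈ ppow X n := by
  induction n with
  | zero => omega
  | succ n ih =>
    rcases Nat.lt_or_ge n 1 with h | h
    · interval_cases n
      rw [ppow, mem_pmul]
      exact ⟨x, hx, 1, by simp [ppow], by simpa using hpos, by simp⟩
    · rw [ppow, mem_pmul]
      exact ⟨x, hx, x, ih h, by simpa [Nat.gcd_self] using hpos, (Nat.lcm_self x).symm⟩

/-- remainder term of `ppow` of a sum -/
def paux (P R : Multiset ℕ) : ℕ → Multiset ℕ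
  | 0 => 0
  | n + 1 => pmul P (paux P R n) + pmul R (ppow (P + R) n)

lemma ppow_sum_decomp (P R : Multiset ℕ) (n : ℕ) : ppow (P + R) n = ppow P n + paux P R n := by
  induction n with
  | zero => simp [ppow, paux]
  | succ n ih =>
    show pmul (P + R) (ppow (P + R) n) = ppow P (n + 1) + paux P R (n + 1)
    rw [ih, paux, ppow, ih, pmul_add_left, pmul_add_right]
    abel

/-- let `P(X) = Σ_{j=0}^k A_j X^j` be a polynomial over the permutations with
a fixed point (the element `1`) in some non-constant coefficient. Let `X` be a nonempty
permutation whose elements, in nondecreasing order, are given by the sorted list `l`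
(so `x_{i+1} = l.get i`), and let `i < m`. Then `P(pref_i X)` is a submultiset of `P(X)`,
and the minimum element of the multiset difference `P(X) − P(pref_i X)` is `x_{i+1}`. -/
theorem peval_prefix_min (A : ℕ → Multiset ℕ) (k : ℕ) (hA : ∀ j ≤ k, IsPerm (A j))
    (hfix : ∃ j, 1 ≤ j ∧ j ≤ k ∧ (1 : ℕ) ∈ A j)
    (l : List ℕ) (hl : l.Pairwise (· ≤ ·)) (hpos : ∀ x ∈ l, 0 < x)
    (i : ℕ) (hi : i < l.length) :
    peval A k (↑(l.take i)) ≤ peval A k (↑l) ∧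
    l.get ⟨i, hi⟩ ∈ peval A k (↑l) - peval A k (↑(l.take i)) ∧
    ∀ y ∈ peval A k (↑l) - peval A k (↑(l.take i)), l.get ⟨i, hi⟩ ≤ y := by
  set x := l.get ⟨i, hi⟩ with hx
  set P : Multiset ℕ := ↑(l.take i) with hP
  set R : Multiset ℕ := ↑(l.drop i) with hR
  have hPR : (↑l : Multiset ℕ) = P + R := by
    rw [hP, hR, Multiset.coe_add]
    exact congrArg _ (l.take_append_drop i).symm
  have hxR : x ∈ R := by
    rw [hR]
    have hd : l.drop i = x :: l.drop (i + 1) := by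
      rw [hx]; simpa using List.drop_eq_getElem_cons hi
    simp [hd]
  have hRge : ∀ r ∈ R, x ≤ r := by
    intro r hr
    rw [hR, Multiset.mem_coe, List.mem_iff_getElem] at hr
    obtain ⟨j, hj, rfl⟩ := hr
    have hj' : i + j < l.length := by
      rw [List.length_drop] at hj; omega
    rw [List.getElem_drop]
    rcases Nat.eq_or_lt_of_le (Nat.le_add_right i j) with h | h
    · rw [hx]; simp [List.get_eq_getElem, ← h]
    · exact List.pairwise_iff_getElem.mp hl i (i + j) hi hj' h
  have hXperm : IsPerm (P + R) := by
    rw [← hPR]; intro y hy; exact hpos y (Multiset.mem_coe.mp hy)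
  have hRpos : ∀ r ∈ R, 0 < r := fun r hr =>
    hXperm r (by rw [hPR] at *; exact Multiset.mem_add.mpr (Or.inr hr))
  have hPpos : ∀ p ∈ P, 0 < p := fun p hp =>
    hXperm p (Multiset.mem_add.mpr (Or.inl hp))
  have hxpos : 0 < x := hRpos x hxR
  have hxX : x ∈ P + R := Multiset.mem_add.mpr (Or.inr hxR)
  -- key invariant of paux
  have hkey : ∀ n, ∀ y ∈ paux P R n, x ≤ y ∧ 0 < y := by
    intro n
    induction n with
    | zero => intro y hy; simp [paux] at hy
    | succ n ih =>
      intro y hy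
      rw [paux, Multiset.mem_add] at hy
      rcases hy with hy | hy
      · rw [mem_pmul] at hy
        obtain ⟨a, ha, b, hb, hg, rfl⟩ := hy
        obtain ⟨hxb, hbpos⟩ := ih b hb
        have hl0 : 0 < Nat.lcm a b :=
          Nat.pos_of_ne_zero (Nat.lcm_ne_zero (hPpos a ha).ne' hbpos.ne')
        exact ⟨hxb.trans (Nat.le_of_dvd hl0 (Nat.dvd_lcm_right a b)), hl0⟩
      · rw [mem_pmul] at hy
        obtain ⟨a, ha, b, hb, hg, rfl⟩ := hy
        have hbpos : 0 < b := ppow_pos hXperm n b hb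
        have hl0 : 0 < Nat.lcm a b :=
          Nat.pos_of_ne_zero (Nat.lcm_ne_zero (hRpos a ha).ne' hbpos.ne')
        exact ⟨(hRge a ha).trans (Nat.le_of_dvd hl0 (Nat.dvd_lcm_left a b)), hl0⟩
  -- x is in paux for every n ≥ 1
  have hxmem : ∀ n, 1 ≤ n → x ∈ paux P R n := by
    intro n hn
    rcases Nat.lt_or_ge n 2 with h | h
    · interval_cases n
      rw [paux, Multiset.mem_add]
      right
      rw [mem_pmul]
      exact ⟨x, hxR, 1, by simp [ppow], by simpa using hxpos, by simp⟩
    · obtain ⟨m, rfl⟩ : ∃ m, n = m + 1 := ⟨n - 1, by omega⟩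
      rw [paux, Multiset.mem_add]
      right
      rw [mem_pmul]
      exact ⟨x, hxR, x, mem_ppow hxX hxpos (by omega),
        by simpa [Nat.gcd_self] using hxpos, (Nat.lcm_self x).symm⟩
  -- decomposition of peval
  have hdecomp : peval A k (↑l) =
      peval A k P + (Finset.range (k + 1)).sum (fun j => pmul (A j) (paux P R j)) := by
    rw [hPR]
    unfold peval
    rw [← Finset.sum_add_distrib]
    refine Finset.sum_congr rfl fun j _ => ?_
    rw [ppow_sum_decomp, pmul_add_right]
  have hsub : peval A k (↑l) - peval A k P =
      (Finset.range (k + 1)).sum (fun j => pmul (A j) (paux P R j)) := by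
    rw [hdecomp, add_tsub_cancel_left]
  refine ⟨?_, ?_, ?_⟩
  · rw [hdecomp]; exact Multiset.le_add_right _ _
  · rw [hsub]
    obtain ⟨j, hj1, hjk, h1A⟩ := hfix
    have h1 : x ∈ pmul (A j) (paux P R j) := by
      refine Multiset.mem_of_le (pmul_le_left _ (Multiset.singleton_le.mpr h1A)) ?_
      rw [one_pmul]
      exact hxmem j hj1
    refine Multiset.mem_of_le (Finset.single_le_sum (fun _ _ => Multiset.zero_le _) ?_) h1
    exact Finset.mem_range.mpr (by omega)
  · rw [hsub]
    intro y hy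
    rw [Multiset.mem_sum] at hy
    obtain ⟨j, hj, hy⟩ := hy
    rw [mem_pmul] at hy
    obtain ⟨a, ha, b, hb, hg, rfl⟩ := hy
    obtain ⟨hxb, hbpos⟩ := hkey j b hb
    have hapos : 0 < a := hA j (by simpa using Nat.lt_succ_iff.mp (Finset.mem_range.mp hj)) a ha
    have hl0 : 0 < Nat.lcm a b :=
      Nat.pos_of_ne_zero (Nat.lcm_ne_zero hapos.ne' hbpos.ne')
    exact hxb.trans (Nat.le_of_dvd hl0 (Nat.dvd_lcm_right a b))
end

section
/- Let P(X) = Σ_{i=0}^m A_i X^i be a polynomial over the permutations. Then P is injective on the semiring of permutations (P(X) = P(Y) implies X = Y for all permutations X, Y) if and only if at least one non-constant coefficient A_i with i ≥ 1 contains the element 1 (a fixed point). -/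
/-- number of fixed points of σ^n : sum of cycle lengths dividing n. -/
def F (M : Multiset ℕ) (n : ℕ) : ℕ := (M.map fun a => if a ∣ n then a else 0).sum

lemma F_add (A B : Multiset ℕ) (n : ℕ) : F (A + B) n = F A n + F B n := by
  simp [F]

lemma F_zero (n : ℕ) : F 0 n = 0 := rfl

lemma F_singleton (e n : ℕ) : F {e} n = if e ∣ n then e else 0 := by
  simp [F]

lemma F_replicate_one (e n : ℕ) : F (Multiset.replicate e 1) n = e := by
  simp [F]

lemma F_pmul (A B : Multiset ℕ) (n : ℕ) : F (pmul A B) n = F A n * F B n := by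
  unfold pmul F
  rw [Multiset.map_bind, Multiset.sum_bind]
  have key : ∀ a : ℕ,
      (Multiset.map (fun x => if x ∣ n then x else 0)
        (B.bind fun b => Multiset.replicate (a.gcd b) (a.lcm b))).sum
      = (if a ∣ n then a else 0) * (Multiset.map (fun x => if x ∣ n then x else 0) B).sum := by
    intro a
    rw [Multiset.map_bind, Multiset.sum_bind]
    have step : (Multiset.map
        (fun b => (Multiset.map (fun x => if x ∣ n then x else 0)
          (Multiset.replicate (a.gcd b) (a.lcm b))).sum) B)
        = Multiset.map (fun b => (if a ∣ n then a else 0) * (if b ∣ n then b else 0)) B := by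
      apply Multiset.map_congr rfl
      intro b _
      rw [Multiset.map_replicate, Multiset.sum_replicate, smul_eq_mul]
      by_cases hab : Nat.lcm a b ∣ n
      · rw [if_pos hab]
        obtain ⟨ha, hb⟩ := Nat.lcm_dvd_iff.mp hab
        rw [if_pos ha, if_pos hb, Nat.gcd_mul_lcm]
      · rw [if_neg hab]
        rcases (not_and_or.mp fun h => hab (Nat.lcm_dvd_iff.mpr h)) with h | h
        · rw [if_neg h, zero_mul, mul_zero]
        · rw [if_neg h, mul_zero, mul_zero]
    rw [step, Multiset.sum_map_mul_left]
  have step2 : (Multiset.map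
      (fun a => (Multiset.map (fun x => if x ∣ n then x else 0)
        (B.bind fun b => Multiset.replicate (a.gcd b) (a.lcm b))).sum) A)
      = Multiset.map (fun a => (if a ∣ n then a else 0)
          * (Multiset.map (fun x => if x ∣ n then x else 0) B).sum) A :=
    Multiset.map_congr rfl fun a _ => key a
  rw [step2, Multiset.sum_map_mul_right]

lemma F_ppow (X : Multiset ℕ) (i n : ℕ) : F (ppow X i) n = (F X n) ^ i := by
  induction i with
  | zero => simp [ppow, F]
  | succ k ih => rw [ppow, F_pmul, ih, pow_succ, mul_comm]

lemma F_sum {α : Type*} (s : Finset α) (f : α → Multiset ℕ) (n : ℕ) :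
    F (∑ i ∈ s, f i) n = ∑ i ∈ s, F (f i) n := by
  classical
  induction s using Finset.induction_on with
  | empty => simp [F]
  | insert _ _ h ih => rw [Finset.sum_insert h, Finset.sum_insert h, F_add, ih]

lemma F_peval (A : ℕ → Multiset ℕ) (m : ℕ) (X : Multiset ℕ) (n : ℕ) :
    F (peval A m X) n = ∑ i ∈ Finset.range (m + 1), F (A i) n * (F X n) ^ i := by
  unfold peval
  rw [F_sum]
  exact Finset.sum_congr rfl fun i _ => by rw [F_pmul, F_ppow]

lemma F_divisor_sum (A : Multiset ℕ) {k : ℕ} (hk : k ≠ 0) :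
    F A k = ∑ d ∈ k.divisors, d * A.count d := by
  unfold F
  rw [Finset.sum_multiset_map_count]
  rw [← Finset.sum_filter_add_sum_filter_not A.toFinset (· ∣ k)]
  have h2 : ∑ m ∈ A.toFinset.filter (¬ · ∣ k), A.count m • (if m ∣ k then m else 0) = 0 := by
    apply Finset.sum_eq_zero
    intro m hm
    rw [Finset.mem_filter] at hm
    rw [if_neg hm.2, smul_zero]
  rw [h2, add_zero]
  apply Finset.sum_subset_zero_on_sdiff
  · intro d hd
    rw [Finset.mem_filter] at hd
    exact Nat.mem_divisors.mpr ⟨hd.2, hk⟩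
  · intro d hd
    rw [Finset.mem_sdiff] at hd
    have hdk : d ∣ k := (Nat.mem_divisors.mp hd.1).1
    have : d ∉ A.toFinset := fun h => hd.2 (Finset.mem_filter.mpr ⟨h, hdk⟩)
    rw [Multiset.mem_toFinset] at this
    rw [Multiset.count_eq_zero_of_notMem this, mul_zero]
  · intro d hd
    rw [Finset.mem_filter] at hd
    rw [if_pos hd.2, smul_eq_mul, mul_comm]

lemma F_inj {A B : Multiset ℕ} (hA : IsPerm A) (hB : IsPerm B)
    (h : ∀ n, F A n = F B n) : A = B := by
  ext k
  induction k using Nat.strong_induction_on with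
  | _ k ih =>
    rcases Nat.eq_zero_or_pos k with hk | hk
    · subst hk
      rw [Multiset.count_eq_zero_of_notMem fun hm => lt_irrefl 0 (hA 0 hm),
        Multiset.count_eq_zero_of_notMem fun hm => lt_irrefl 0 (hB 0 hm)]
    · have h1 : ∑ d ∈ k.divisors, d * A.count d = ∑ d ∈ k.divisors, d * B.count d := by
        rw [← F_divisor_sum A hk.ne', ← F_divisor_sum B hk.ne', h k]
      have hmem : k ∈ k.divisors := Nat.mem_divisors_self k hk.ne'
      rw [← Finset.add_sum_erase _ _ hmem, ← Finset.add_sum_erase _ _ hmem] at h1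
      have h2 : ∑ d ∈ k.divisors.erase k, d * A.count d
          = ∑ d ∈ k.divisors.erase k, d * B.count d := by
        apply Finset.sum_congr rfl
        intro d hd
        have hdk : d ∣ k := (Nat.mem_divisors.mp (Finset.mem_of_mem_erase hd)).1
        have hdlt : d < k :=
          lt_of_le_of_ne (Nat.le_of_dvd hk hdk) (Finset.ne_of_mem_erase hd)
        rw [ih d hdlt]
      rw [h2] at h1
      have h3 : k * A.count k = k * B.count k := by omega
      exact Nat.eq_of_mul_eq_mul_left hk h3

lemma isPerm_add {A B : Multiset ℕ} (hA : IsPerm A) (hB : IsPerm B) : IsPerm (A + B) := by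
  intro x hx
  rcases Multiset.mem_add.mp hx with h | h
  · exact hA x h
  · exact hB x h

lemma isPerm_pmul {A B : Multiset ℕ} (hA : IsPerm A) (hB : IsPerm B) : IsPerm (pmul A B) := by
  intro x hx
  unfold pmul at hx
  rw [Multiset.mem_bind] at hx
  obtain ⟨a, ha, hx⟩ := hx
  rw [Multiset.mem_bind] at hx
  obtain ⟨b, hb, hx⟩ := hx
  rw [Multiset.eq_of_mem_replicate hx]
  exact Nat.lcm_pos (hA a ha) (hB b hb)

lemma isPerm_ppow {X : Multiset ℕ} (hX : IsPerm X) (i : ℕ) : IsPerm (ppow X i) := by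
  induction i with
  | zero => intro x hx; rw [Multiset.mem_singleton.mp hx]; exact one_pos
  | succ k ih => exact isPerm_pmul hX ih

lemma isPerm_peval {A : ℕ → Multiset ℕ} {m : ℕ} (hA : ∀ i ≤ m, IsPerm (A i))
    {X : Multiset ℕ} (hX : IsPerm X) : IsPerm (peval A m X) := by
  intro x hx
  unfold peval at hx
  rw [Multiset.mem_sum] at hx
  obtain ⟨i, hi, hx⟩ := hx
  exact isPerm_pmul (hA i (Finset.mem_range_succ_iff.mp hi)) (isPerm_ppow hX i) x hx

/-- the pair of permutations realizing `Π (e - e[e∣n])` as a difference. -/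
def XY : List ℕ → Multiset ℕ × Multiset ℕ
  | [] => ({1}, 0)
  | e :: t =>
      (pmul (Multiset.replicate e 1) (XY t).1 + pmul {e} (XY t).2,
       pmul (Multiset.replicate e 1) (XY t).2 + pmul {e} (XY t).1)

lemma isPerm_XY (l : List ℕ) (hl : ∀ e ∈ l, 0 < e) :
    IsPerm (XY l).1 ∧ IsPerm (XY l).2 := by
  induction l with
  | nil =>
    constructor
    · intro x hx; rw [Multiset.mem_singleton.mp hx]; exact one_pos
    · intro x hx; simp [XY] at hx
  | cons e t ih =>
    obtain ⟨ih1, ih2⟩ := ih fun x hx => hl x (List.mem_cons_of_mem e hx)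
    have he : 0 < e := hl e List.mem_cons_self
    have hrep : IsPerm (Multiset.replicate e 1) := by
      intro x hx; rw [Multiset.eq_of_mem_replicate hx]; exact one_pos
    have hsing : IsPerm ({e} : Multiset ℕ) := by
      intro x hx; rw [Multiset.mem_singleton.mp hx]; exact he
    exact ⟨isPerm_add (isPerm_pmul hrep ih1) (isPerm_pmul hsing ih2),
      isPerm_add (isPerm_pmul hrep ih2) (isPerm_pmul hsing ih1)⟩

lemma F_XY_dvd (l : List ℕ) (n : ℕ) (h : ∃ e ∈ l, e ∣ n) :
    F (XY l).1 n = F (XY l).2 n := by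
  induction l with
  | nil => simp at h
  | cons e t ih =>
    show F (pmul (Multiset.replicate e 1) (XY t).1 + pmul {e} (XY t).2) n
      = F (pmul (Multiset.replicate e 1) (XY t).2 + pmul {e} (XY t).1) n
    rw [F_add, F_add, F_pmul, F_pmul, F_pmul, F_pmul, F_replicate_one, F_singleton]
    by_cases hen : e ∣ n
    · rw [if_pos hen]; ring
    · obtain ⟨e', he', he'n⟩ := h
      rcases List.mem_cons.mp he' with rfl | he't
      · exact absurd he'n hen
      · rw [ih ⟨e', he't, he'n⟩]

lemma F_XY_one (l : List ℕ) (hl : ∀ e ∈ l, 2 ≤ e) :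
    F (XY l).1 1 = F (XY l).2 1 + l.prod := by
  induction l with
  | nil => simp [XY, F]
  | cons e t ih =>
    have he : 2 ≤ e := hl e List.mem_cons_self
    have hen : ¬ e ∣ 1 := by
      intro h; have := Nat.le_of_dvd one_pos h; omega
    show F (pmul (Multiset.replicate e 1) (XY t).1 + pmul {e} (XY t).2) 1
      = F (pmul (Multiset.replicate e 1) (XY t).2 + pmul {e} (XY t).1) 1 + (e :: t).prod
    rw [F_add, F_add, F_pmul, F_pmul, F_pmul, F_pmul, F_replicate_one, F_singleton,
      if_neg hen, ih fun x hx => hl x (List.mem_cons_of_mem e hx), List.prod_cons]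
    ring

lemma F_mem_le {M : Multiset ℕ} {a n : ℕ} (ha : a ∈ M) (han : a ∣ n) : a ≤ F M n := by
  unfold F
  have : (if a ∣ n then a else 0) ∈ M.map fun a => if a ∣ n then a else 0 :=
    Multiset.mem_map_of_mem _ ha
  rw [if_pos han] at this
  exact Multiset.single_le_sum (fun x _ => Nat.zero_le x) _ this

lemma F_ne_zero {M : Multiset ℕ} {n : ℕ} (h : F M n ≠ 0) : ∃ a ∈ M, a ∣ n := by
  by_contra hc
  push_neg at hc
  apply h
  unfold F
  apply Multiset.sum_eq_zero
  intro x hx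
  rw [Multiset.mem_map] at hx
  obtain ⟨a, ha, rfl⟩ := hx
  rw [if_neg (hc a ha)]

/-- a polynomial `P(X) = Σ_{i=0}^m A_i X^i` over the permutations is
injective over the semiring of permutations if and only if some non-constant
coefficient contains a fixed point (the element `1`). -/
theorem peval_injective_iff_fixpoint (A : ℕ → Multiset ℕ) (m : ℕ)
    (hA : ∀ i ≤ m, IsPerm (A i)) :
    (∀ X Y : Multiset ℕ, IsPerm X → IsPerm Y → peval A m X = peval A m Y → X = Y) ↔
      ∃ i, 1 ≤ i ∧ i ≤ m ∧ (1 : ℕ) ∈ A i := by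
  constructor
  · -- injective → fixed point
    intro hinj
    by_contra hc
    push_neg at hc
    -- list of all cycle lengths of non-constant coefficients
    set S : Multiset ℕ := ∑ i ∈ Finset.Icc 1 m, A i with hS
    set l : List ℕ := S.toList with hlist
    have hmeml : ∀ e, e ∈ l ↔ ∃ i, 1 ≤ i ∧ i ≤ m ∧ e ∈ A i := by
      intro e
      rw [hlist, Multiset.mem_toList, hS, Multiset.mem_sum]
      constructor
      · rintro ⟨i, hi, he⟩
        rw [Finset.mem_Icc] at hi
        exact ⟨i, hi.1, hi.2, he⟩
      · rintro ⟨i, h1, h2, he⟩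
        exact ⟨i, Finset.mem_Icc.mpr ⟨h1, h2⟩, he⟩
    have hl2 : ∀ e ∈ l, 2 ≤ e := by
      intro e he
      obtain ⟨i, h1, h2, he⟩ := (hmeml e).mp he
      have hpos := hA i h2 e he
      have hne : e ≠ 1 := fun h => hc i h1 h2 (h ▸ he)
      omega
    set X := (XY l).1 with hX
    set Y := (XY l).2 with hY
    obtain ⟨hXP, hYP⟩ := isPerm_XY l fun e he => by have := hl2 e he; omega
    have hXY : X ≠ Y := by
      intro h
      have h1 := F_XY_one l hl2
      have hp : 0 < l.prod := List.prod_pos fun e he => by have := hl2 e he; omega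
      rw [← hX, ← hY, h] at h1
      omega
    apply hXY
    apply hinj X Y hXP hYP
    apply F_inj (isPerm_peval hA hXP) (isPerm_peval hA hYP)
    intro n
    rw [F_peval, F_peval]
    apply Finset.sum_congr rfl
    intro i hi
    rcases Nat.eq_zero_or_pos i with rfl | hipos
    · simp
    · by_cases hFi : F (A i) n = 0
      · rw [hFi, zero_mul, zero_mul]
      · obtain ⟨a, ha, han⟩ := F_ne_zero hFi
        have hal : a ∈ l := (hmeml a).mpr ⟨i, hipos, Finset.mem_range_succ_iff.mp hi, ha⟩
        rw [← hX, ← hY, F_XY_dvd l n ⟨a, hal, han⟩]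
  · -- fixed point → injective
    rintro ⟨i₀, hi₀1, hi₀m, hfix⟩ X Y hX hY hpe
    apply F_inj hX hY
    intro n
    have key : ∀ n, F (peval A m X) n = F (peval A m Y) n := fun n => by rw [hpe]
    have hval := key n
    rw [F_peval, F_peval] at hval
    -- strict monotonicity argument
    have mono : ∀ x y : ℕ, x < y →
        ∑ i ∈ Finset.range (m + 1), F (A i) n * x ^ i
          < ∑ i ∈ Finset.range (m + 1), F (A i) n * y ^ i := by
      intro x y hxy
      apply Finset.sum_lt_sum
      · intro i _
        exact Nat.mul_le_mul_left _ (Nat.pow_le_pow_left hxy.le i)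
      · refine ⟨i₀, Finset.mem_range_succ_iff.mpr hi₀m, ?_⟩
        have hF : 1 ≤ F (A i₀) n := F_mem_le hfix (one_dvd n)
        have hpow : x ^ i₀ < y ^ i₀ := Nat.pow_lt_pow_left hxy (by omega)
        exact Nat.mul_lt_mul_of_le_of_lt (le_refl _) hpow (by omega)
    rcases lt_trichotomy (F X n) (F Y n) with h | h | h
    · exact absurd hval (Nat.ne_of_lt (mono _ _ h))
    · exact h
    · exact absurd hval.symm (Nat.ne_of_lt (mono _ _ h))
end

section
/- Let P(X) = Σ_{i=0}^m A_i X^i be a pseudo-injective polynomial over the permutations with seed g, let b be a positive integer divisible by g, and set m' = alcm_g b. Let d be a divisor of g coprime with m'. Then for every permutation X and every divisor e of d, P(X + {d·m'}) = P(X + e copies of the singleton {(d/e)·m'}), where + denotes multiset union. In particular, P(X + {d·m'}) = B if and only if P(X + e copies of {(d/e)·m'}) = B for every divisor e of d. -/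
/-- `ell X` is the minimum element of the (nonempty) multiset `X`. -/
noncomputable def ell (X : Multiset ℕ) : ℕ := sInf {x : ℕ | x ∈ X}

/-- The anti-lcm of `b` with respect to `a`: the smallest positive `c` with `lcm(a, c) = b`. -/
noncomputable def alcm (a b : ℕ) : ℕ := sInf {c : ℕ | 0 < c ∧ Nat.lcm a c = b}

/-- `P = Σ_{i=0}^m A_i X^i` is pseudo-injective with seed `g`: `g` occurs as an element of
some non-constant coefficient and divides every element of every non-constant coefficient
(hence `g` is the minimum element occurring among the non-constant coefficients). -/
def PseudoInjective (A : ℕ → Multiset ℕ) (m g : ℕ) : Prop :=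
  (∃ i, 1 ≤ i ∧ i ≤ m ∧ g ∈ A i) ∧ ∀ i, 1 ≤ i → i ≤ m → ∀ x ∈ A i, g ∣ x

section AuxLemmas

lemma my_replicate_bind {α β : Type*} (n : ℕ) (a : α) (f : α → Multiset β) :
    (Multiset.replicate n a).bind f = n • f a := by
  induction n with
  | zero => simp
  | succ k ih =>
      rw [Multiset.replicate_succ, Multiset.cons_bind, ih, succ_nsmul' (f a) k]

lemma my_smul_bind {α β : Type*} (n : ℕ) (s : Multiset α) (f : α → Multiset β) :
    (s.bind fun a => n • f a) = n • s.bind f := by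
  induction n with
  | zero => simp
  | succ k ih => simp [succ_nsmul, Multiset.bind_add, ih]

lemma pmul_singleton_left (a : ℕ) (B : Multiset ℕ) :
    pmul {a} B = B.bind fun b => Multiset.replicate (Nat.gcd a b) (Nat.lcm a b) := by
  simp [pmul, Multiset.singleton_bind]

lemma pmul_eq_bind (A B : Multiset ℕ) : pmul A B = A.bind fun a => pmul {a} B := by
  simp [pmul, Multiset.singleton_bind]

lemma pmul_pos {A B : Multiset ℕ} (hA : ∀ a ∈ A, 0 < a) (hB : ∀ b ∈ B, 0 < b) :
    ∀ x ∈ pmul A B, 0 < x := by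
  intro x hx
  simp only [pmul, Multiset.mem_bind] at hx
  obtain ⟨a, ha, b, hb, hx⟩ := hx
  rw [Multiset.eq_of_mem_replicate hx]
  exact Nat.lcm_pos (hA a ha) (hB b hb)

lemma ppow_pos_s17 {A : Multiset ℕ} (hA : ∀ a ∈ A, 0 < a) (k : ℕ) :
    ∀ x ∈ ppow A k, 0 < x := by
  induction k with
  | zero => intro x hx; simp [ppow] at hx; omega
  | succ n ih => exact pmul_pos hA ih

lemma gcd_key_count (a b c : ℕ) (ha : 0 < a) (hb : 0 < b) (hc : 0 < c) :
    Nat.gcd a b * Nat.gcd (Nat.lcm a b) c = Nat.gcd b c * Nat.gcd a (Nat.lcm b c) := by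
  have hL : 0 < Nat.lcm a (Nat.lcm b c) :=
    Nat.lcm_pos ha (Nat.lcm_pos hb hc)
  apply Nat.eq_of_mul_eq_mul_right hL
  have hassoc : Nat.lcm (Nat.lcm a b) c = Nat.lcm a (Nat.lcm b c) := Nat.lcm_assoc a b c
  calc Nat.gcd a b * Nat.gcd (Nat.lcm a b) c * Nat.lcm a (Nat.lcm b c)
      = Nat.gcd a b * (Nat.gcd (Nat.lcm a b) c * Nat.lcm (Nat.lcm a b) c) := by
        rw [hassoc]; ring
    _ = Nat.gcd a b * (Nat.lcm a b * c) := by rw [Nat.gcd_mul_lcm]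
    _ = Nat.gcd a b * Nat.lcm a b * c := by ring
    _ = a * b * c := by rw [Nat.gcd_mul_lcm]
    _ = a * (b * c) := by ring
    _ = a * (Nat.gcd b c * Nat.lcm b c) := by rw [Nat.gcd_mul_lcm]
    _ = Nat.gcd b c * (a * Nat.lcm b c) := by ring
    _ = Nat.gcd b c * (Nat.gcd a (Nat.lcm b c) * Nat.lcm a (Nat.lcm b c)) := by
        rw [Nat.gcd_mul_lcm]
    _ = Nat.gcd b c * Nat.gcd a (Nat.lcm b c) * Nat.lcm a (Nat.lcm b c) := by ring

lemma pmul_assoc_singleton (a : ℕ) (ha : 0 < a) (B C : Multiset ℕ)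
    (hB : ∀ b ∈ B, 0 < b) (hC : ∀ c ∈ C, 0 < c) :
    pmul (pmul {a} B) C = pmul {a} (pmul B C) := by
  simp only [pmul, Multiset.singleton_bind, Multiset.bind_assoc, my_replicate_bind,
    ← my_smul_bind, Multiset.nsmul_replicate]
  apply Multiset.bind_congr
  intro b hb
  apply Multiset.bind_congr
  intro c hc
  rw [Nat.lcm_assoc, gcd_key_count a b c ha (hB b hb) (hC c hc)]

lemma gcd_mul_of_dvd {w d' m' : ℕ} (hd'w : d' ∣ w) (hcop : Nat.Coprime d' m') :
    Nat.gcd w (d' * m') = d' * Nat.gcd w m' := by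
  obtain ⟨w', rfl⟩ := hd'w
  rw [Nat.gcd_mul_left]
  congr 1
  exact (Nat.Coprime.gcd_mul_left_cancel w' hcop).symm

lemma lcm_mul_of_dvd {w d' m' : ℕ} (hw : 0 < w) (hd' : 0 < d')
    (hd'w : d' ∣ w) (hcop : Nat.Coprime d' m') :
    Nat.lcm w (d' * m') = Nat.lcm w m' := by
  have hg : 0 < Nat.gcd w m' := Nat.gcd_pos_of_pos_left m' hw
  have hpos : 0 < d' * Nat.gcd w m' := Nat.mul_pos hd' hg
  apply Nat.eq_of_mul_eq_mul_left hpos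
  have h1 := Nat.gcd_mul_lcm w (d' * m')
  have h2 := Nat.gcd_mul_lcm w m'
  rw [gcd_mul_of_dvd hd'w hcop] at h1
  calc d' * Nat.gcd w m' * Nat.lcm w (d' * m') = w * (d' * m') := h1
    _ = d' * (Nat.gcd w m' * Nat.lcm w m') := by rw [h2]; ring
    _ = d' * Nat.gcd w m' * Nat.lcm w m' := by ring

lemma exchange_single {d m' : ℕ} (hd : 0 < d)
    (hcop : Nat.Coprime d m') {e : ℕ} (he : e ∣ d)
    {w : ℕ} (hw : 0 < w) (hdw : d ∣ w) :
    pmul {w} (Multiset.replicate e (d / e * m')) =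
      Multiset.replicate (d * Nat.gcd w m') (Nat.lcm w m') := by
  have hde : d / e ∣ d := ⟨e, (Nat.div_mul_cancel he).symm⟩
  have hde0 : 0 < d / e := Nat.div_pos (Nat.le_of_dvd hd he)
    (Nat.pos_of_dvd_of_pos he hd)
  have hcop' : Nat.Coprime (d / e) m' := Nat.Coprime.coprime_dvd_left hde hcop
  have hdew : d / e ∣ w := dvd_trans hde hdw
  rw [pmul_singleton_left, my_replicate_bind,
    gcd_mul_of_dvd hdew hcop', lcm_mul_of_dvd hw hde0 hdew hcop',
    Multiset.nsmul_replicate]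
  congr 1
  rw [← mul_assoc, Nat.mul_div_cancel' he]

lemma ppow_exchange {g d m' : ℕ} (hg : 0 < g) (hm' : 0 < m') (hd : d ∣ g)
    (hdpos : 0 < d) (hcop : Nat.Coprime d m') (X : Multiset ℕ) (hX : IsPerm X) :
    ∀ k : ℕ, ∀ e₁ e₂ : ℕ, e₁ ∣ d → e₂ ∣ d → ∀ w : ℕ, 0 < w → g ∣ w →
      pmul {w} (ppow (X + Multiset.replicate e₁ (d / e₁ * m')) k) =
      pmul {w} (ppow (X + Multiset.replicate e₂ (d / e₂ * m')) k) := by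
  intro k
  induction k with
  | zero => intro _ _ _ _ _ _ _; rfl
  | succ n ih =>
      intro e₁ e₂ he₁ he₂ w hw hgw
      have hdw : d ∣ w := dvd_trans hd hgw
      have hQpos : ∀ e : ℕ, e ∣ d →
          ∀ x ∈ X + Multiset.replicate e (d / e * m'), 0 < x := by
        intro e he x hx
        rcases Multiset.mem_add.mp hx with h | h
        · exact hX x h
        · rw [Multiset.eq_of_mem_replicate h]
          have : 0 < d / e := Nat.div_pos (Nat.le_of_dvd hdpos he)
            (Nat.pos_of_dvd_of_pos he hdpos)
          exact Nat.mul_pos this hm'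
      have key : ∀ e : ℕ, e ∣ d →
          pmul {w} (ppow (X + Multiset.replicate e (d / e * m')) (n + 1)) =
          pmul (pmul {w} X +
            Multiset.replicate (d * Nat.gcd w m') (Nat.lcm w m'))
            (ppow (X + Multiset.replicate e (d / e * m')) n) := by
        intro e hee
        have hstep : ppow (X + Multiset.replicate e (d / e * m')) (n + 1)
            = pmul (X + Multiset.replicate e (d / e * m'))
                (ppow (X + Multiset.replicate e (d / e * m')) n) := rfl
        rw [hstep, ← pmul_assoc_singleton w hw _ _ (hQpos e hee)
            (ppow_pos_s17 (hQpos e hee) n),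
          pmul_add_right, exchange_single hdpos hcop hee hw hdw]
      rw [key e₁ he₁, key e₂ he₂]
      set W := pmul {w} X +
        Multiset.replicate (d * Nat.gcd w m') (Nat.lcm w m') with hW
      rw [pmul_eq_bind W, pmul_eq_bind W]
      apply Multiset.bind_congr
      intro u hu
      rw [hW] at hu
      have hu' : 0 < u ∧ g ∣ u := by
        rcases Multiset.mem_add.mp hu with h | h
        · rw [pmul_singleton_left] at h
          obtain ⟨x, hx, hrep⟩ := Multiset.mem_bind.mp h
          rw [Multiset.eq_of_mem_replicate hrep]
          exact ⟨Nat.lcm_pos hw (hX x hx), dvd_trans hgw (Nat.dvd_lcm_left w x)⟩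
        · rw [Multiset.eq_of_mem_replicate h]
          exact ⟨Nat.lcm_pos hw hm', dvd_trans hgw (Nat.dvd_lcm_left w m')⟩
      exact ih e₁ e₂ he₁ he₂ u hu'.1 hu'.2

end AuxLemmas

/-- let `P(X) = Σ_{i=0}^m A_i X^i` be pseudo-injective with seed `g`, let
`b > 0` with `g ∣ b`, set `m' = alcm_g b`, and let `d ∣ g` be coprime with `m'`. Then for
every permutation `X` and every divisor `e` of `d`,
`P(X + {d·m'}) = P(X + e copies of {(d/e)·m'})`; in particular `P(X + {d·m'}) = B` iff
`P(X + e copies of {(d/e)·m'}) = B` for every divisor `e` of `d`. -/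
theorem exchange_cycles_poly (A : ℕ → Multiset ℕ) (m g : ℕ) (hA : ∀ i ≤ m, IsPerm (A i))
    (hpi : PseudoInjective A m g) (b : ℕ) (hb : 0 < b) (hgb : g ∣ b)
    (d : ℕ) (hd : d ∣ g) (hcop : Nat.Coprime d (alcm g b)) :
    (∀ X : Multiset ℕ, IsPerm X → ∀ e : ℕ, e ∣ d →
      peval A m (X + {d * alcm g b}) =
        peval A m (X + Multiset.replicate e (d / e * alcm g b))) ∧
    ∀ (X : Multiset ℕ), IsPerm X → ∀ B : Multiset ℕ,
      (peval A m (X + {d * alcm g b}) = B ↔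
        ∀ e : ℕ, e ∣ d →
          peval A m (X + Multiset.replicate e (d / e * alcm g b)) = B) := by
  set m' := alcm g b with hm'def
  -- basic positivity facts
  obtain ⟨⟨i₀, hi₀1, hi₀m, hgi₀⟩, hdvd⟩ := hpi
  have hg : 0 < g := hA i₀ hi₀m g hgi₀
  have hdpos : 0 < d := Nat.pos_of_dvd_of_pos hd hg
  have hm' : 0 < m' := by
    have hbmem : b ∈ {c : ℕ | 0 < c ∧ Nat.lcm g c = b} :=
      ⟨hb, Nat.dvd_antisymm (Nat.lcm_dvd hgb dvd_rfl) (Nat.dvd_lcm_right g b)⟩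
    have := Nat.sInf_mem (s := {c : ℕ | 0 < c ∧ Nat.lcm g c = b}) ⟨b, hbmem⟩
    exact this.1
  -- singleton is the e = 1 case
  have hsing : ({d * m'} : Multiset ℕ) = Multiset.replicate 1 (d / 1 * m') := by
    rw [Nat.div_one, Multiset.replicate_one]
  have main : ∀ X : Multiset ℕ, IsPerm X → ∀ e : ℕ, e ∣ d →
      peval A m (X + {d * m'}) =
        peval A m (X + Multiset.replicate e (d / e * m')) := by
    intro X hX e he
    rw [hsing]
    unfold peval
    apply Finset.sum_congr rfl
    intro i hi
    rcases Nat.eq_zero_or_pos i with h0 | h1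
    · subst h0; rfl
    · rw [pmul_eq_bind, pmul_eq_bind]
      apply Multiset.bind_congr
      intro a ha
      have him : i ≤ m := Nat.lt_succ_iff.mp (Finset.mem_range.mp hi)
      exact ppow_exchange hg hm' hd hdpos hcop X hX i 1 e (one_dvd d) he a
        (hA i him a ha) (hdvd i h1 him a ha)
  refine ⟨main, fun X hX B => ⟨fun h e he => by rw [← main X hX e he]; exact h,
    fun h => ?_⟩⟩
  have := h 1 (one_dvd d)
  rwa [← hsing] at this
end
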